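/- If x ∈ ℂ^N is periodic and x̂ is its conjugate reflection, x̂[n] = conj(x[−n]) (indices mod N), then x̂ has the same FROG trace as x: for all p, k, |Σ_{n=0}^{N−1} x̂[n] x̂[n+pL] e^{−2πink/N}|² = |Σ_{n=0}^{N−1} x[n] x[n+pL] e^{−2πink/N}|². -/

import Mathlib

/-- The conjugate reflection `x̂[n] = conj(x[−n])` leaves the FROG trace unchanged. -/
theorem frog_trace_reflection_invariant (N L : ℕ) [NeZero N] (hL : 1 ≤ L) (hLN : L < N)
    (x : ZMod N → ℂ) (p k : ℕ) :
    ‖∑ n : ZMod N,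
        (starRingEnd ℂ) (x (-n)) * (starRingEnd ℂ) (x (-(n + (p * L : ℕ)))) *
        Complex.exp (-2 * Real.pi * Complex.I * n.val * k / N)‖ ^ 2 =
    ‖∑ n : ZMod N,
        x n * x (n + (p * L : ℕ)) *
        Complex.exp (-2 * Real.pi * Complex.I * n.val * k / N)‖ ^ 2 := by
  set c : ZMod N := ((p * L : ℕ) : ZMod N) with hc
  set ζ : ℂ := Complex.exp (-2 * Real.pi * Complex.I * k / N) with hζ
  have hN : (N : ℂ) ≠ 0 := Nat.cast_ne_zero.mpr (NeZero.ne N)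
  have habs : ‖ζ‖ = 1 := by
    have h1 : (-2 * Real.pi * Complex.I * k / N) = ((-2 * Real.pi * k / N : ℝ)) * Complex.I := by
      push_cast; ring
    rw [hζ, h1, Complex.norm_exp_ofReal_mul_I]
  have hzN : ζ ^ N = 1 := by
    rw [hζ, ← Complex.exp_nat_mul]
    have h2 : (N : ℂ) * (-2 * Real.pi * Complex.I * k / N) = ((-(k : ℤ) : ℤ) : ℂ) * (2 * Real.pi * Complex.I) := by
      push_cast; field_simp
    rw [h2]
    exact_mod_cast Complex.exp_int_mul_two_pi_mul_I (-(k : ℤ))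
  have hpow : ∀ m : ℕ, ζ ^ (m % N) = ζ ^ m := by
    intro m
    conv_rhs => rw [← Nat.div_add_mod m N]
    rw [pow_add, pow_mul, hzN, one_pow, one_mul]
  have hval : ∀ a b : ZMod N, ζ ^ (a + b).val = ζ ^ a.val * ζ ^ b.val := by
    intro a b; rw [ZMod.val_add, hpow, pow_add]
  have hexp : ∀ n : ZMod N,
      Complex.exp (-2 * Real.pi * Complex.I * n.val * k / N) = ζ ^ n.val := by
    intro n
    rw [hζ, ← Complex.exp_nat_mul]
    congr 1; ring
  have hconj : ∀ a : ZMod N, (starRingEnd ℂ) (ζ ^ a.val) = ζ ^ (-a).val := by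
    intro a
    have h1 : ζ ^ a.val * ζ ^ (-a).val = 1 := by
      rw [← hval]; simp
    have habsz : ‖ζ ^ a.val‖ = 1 := by rw [norm_pow, habs, one_pow]
    have h2 : (starRingEnd ℂ) (ζ ^ a.val) * ζ ^ a.val = 1 := by
      rw [mul_comm, Complex.mul_conj, Complex.normSq_eq_norm_sq, habsz]
      norm_num
    calc (starRingEnd ℂ) (ζ ^ a.val)
        = (starRingEnd ℂ) (ζ ^ a.val) * (ζ ^ a.val * ζ ^ (-a).val) := by rw [h1, mul_one]
      _ = ((starRingEnd ℂ) (ζ ^ a.val) * ζ ^ a.val) * ζ ^ (-a).val := by ring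
      _ = ζ ^ (-a).val := by rw [h2, one_mul]
  simp_rw [hexp]
  let e : ZMod N ≃ ZMod N := Function.Involutive.toPerm (fun m => -(m + c))
    (fun m => by simp [neg_add_rev, add_assoc])
  have key : (∑ n : ZMod N,
      (starRingEnd ℂ) (x (-n)) * (starRingEnd ℂ) (x (-(n + c))) * ζ ^ n.val)
      = (starRingEnd ℂ) (ζ ^ c.val) *
        (starRingEnd ℂ) (∑ n : ZMod N, x n * x (n + c) * ζ ^ n.val) := by
    rw [← Equiv.sum_comp e (fun n => (starRingEnd ℂ) (x (-n)) * (starRingEnd ℂ) (x (-(n + c))) * ζ ^ n.val)]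
    rw [map_sum, Finset.mul_sum]
    apply Finset.sum_congr rfl
    intro m _
    have he : e m = -(m + c) := rfl
    rw [he]
    simp only [neg_neg, map_mul, ← hconj, hval]
    have h3 : -(-(m + c) + c) = m := by ring
    rw [h3]
    ring
  rw [key, norm_mul, Complex.norm_conj, Complex.norm_conj, norm_pow, habs, one_pow, one_mul]
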